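/- Let n ≥ 2 and let A = {a₁,…,aₘ} be a set of nonnegative integers with a₁ = 0. Define F = {fᵢ(x) = n·x + aᵢ : i = 1,…,m}. Then every nonnegative integer has at most one A-expansion (i.e., at most one representation k = Σⱼ αⱼ nʲ with digits αⱼ ∈ A and leading digit nonzero) if and only if F generates a free semigroup under composition (distinct finite composition sequences give distinct functions). -/

import Mathlib

/-- `l` is an `A`-expansion of `k` in base `n`: all digits in `A`, nonzero leading digit,
and value `k`. The empty list is the expansion of `0`. -/
def IsExpansion (n : ℕ) (A : Finset ℕ) (k : ℕ) (l : List ℕ) : Prop :=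
  (∀ d ∈ l, d ∈ A) ∧ l.getLast? ≠ some 0 ∧ Nat.ofDigits n l = k

/-- Every nonnegative integer has at most one `A`-expansion in base `n`. -/
def UniqueExpansions (n : ℕ) (A : Finset ℕ) : Prop :=
  ∀ k : ℕ, ∀ l₁ l₂ : List ℕ, IsExpansion n A k l₁ → IsExpansion n A k l₂ → l₁ = l₂

/-- The family `f` generates a free semigroup under composition: distinct nonempty
words give distinct composed functions. Composition is left-to-right:
`[u₁,…,u_p] ↦ f u₁ ∘ ⋯ ∘ f u_p`. -/
def FreeComp {α ι : Type*} (f : ι → α → α) : Prop :=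
  ∀ w₁ w₂ : List ι, w₁ ≠ [] → w₂ ≠ [] →
    (w₁.map f).foldr (· ∘ ·) id = (w₂.map f).foldr (· ∘ ·) id → w₁ = w₂

section aux
variable {m : ℕ}

lemma comp_eval (n : ℕ) (a : Fin m → ℕ) (w : List (Fin m)) (x : ℤ) :
    ((w.map (fun (i : Fin m) (x : ℤ) => (n : ℤ) * x + (a i : ℤ))).foldr (· ∘ ·) id) x
      = (n : ℤ) ^ w.length * x + ((Nat.ofDigits n (w.map a) : ℕ) : ℤ) := by
  induction w generalizing x with
  | nil => simp
  | cons u w ih =>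
    simp only [List.map_cons, List.foldr_cons, Function.comp_apply, ih, List.length_cons]
    rw [Nat.ofDigits_cons]
    push_cast
    ring

lemma strip_zeros (l : List ℕ) :
    ∃ l' r, l = l' ++ List.replicate r 0 ∧ l'.getLast? ≠ some 0 := by
  induction l using List.reverseRecOn with
  | nil => exact ⟨[], 0, by simp, by simp⟩
  | append_singleton xs x ih =>
    rcases eq_or_ne x 0 with rfl | hx
    · obtain ⟨l', r, h1, h2⟩ := ih
      exact ⟨l', r + 1, by simp [h1, List.replicate_succ', List.append_assoc], h2⟩
    · exact ⟨xs ++ [x], 0, by simp, by simp [List.getLast?_concat, hx]⟩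

lemma ofDigits_append_zeros (n : ℕ) (l : List ℕ) (r : ℕ) :
    Nat.ofDigits n (l ++ List.replicate r 0) = Nat.ofDigits n l := by
  have h : Nat.ofDigits n (List.replicate r 0) = 0 := by
    induction r with
    | zero => simp
    | succ r ih => simp [List.replicate_succ, Nat.ofDigits_cons, ih]
  simp [Nat.ofDigits_append, h]

lemma ofDigits_zero_digits {n : ℕ} (hn : 0 < n) :
    ∀ l : List ℕ, Nat.ofDigits n l = 0 → ∀ d ∈ l, d = 0 := by
  intro l
  induction l with
  | nil => simp
  | cons d l ih =>
    intro h e he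
    rw [Nat.ofDigits_cons] at h
    have hd : d = 0 ∧ n * Nat.ofDigits n l = 0 := by omega
    rcases Nat.mul_eq_zero.mp hd.2 with h' | h'
    · omega
    rcases List.mem_cons.mp he with rfl | he'
    · exact hd.1
    · exact ih h' e he'

lemma exists_word (a : Fin m → ℕ) (l : List ℕ) (h : ∀ d ∈ l, ∃ i, a i = d) :
    ∃ w : List (Fin m), w.map a = l := by
  induction l with
  | nil => exact ⟨[], rfl⟩
  | cons d l ih =>
    obtain ⟨i, hi⟩ := h d (by simp)
    obtain ⟨w, hw⟩ := ih (fun e he => h e (by simp [he]))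
    exact ⟨i :: w, by simp [hi, hw]⟩

end aux

theorem stmt0 (n m : ℕ) (hn : 2 ≤ n) (a : Fin m → ℕ) (ha : Function.Injective a)
    (h0 : ∃ i, a i = 0) :
    UniqueExpansions n (Finset.image a Finset.univ) ↔
      FreeComp (fun (i : Fin m) (x : ℤ) => (n : ℤ) * x + (a i : ℤ)) := by
  constructor
  · -- UniqueExpansions → FreeComp
    intro UE w₁ w₂ hne₁ hne₂ heq
    have e0 := congrFun heq 0
    have e1 := congrFun heq 1
    rw [comp_eval, comp_eval] at e0 e1
    simp only [mul_zero, zero_add, mul_one] at e0 e1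
    have hC : Nat.ofDigits n (w₁.map a) = Nat.ofDigits n (w₂.map a) := by
      exact_mod_cast e0
    have hlen : w₁.length = w₂.length := by
      have hp : (n : ℤ) ^ w₁.length = (n : ℤ) ^ w₂.length := by omega
      have : n ^ w₁.length = n ^ w₂.length := by exact_mod_cast hp
      exact Nat.pow_right_injective hn this
    obtain ⟨l₁', r₁, hsp₁, hlast₁⟩ := strip_zeros (w₁.map a)
    obtain ⟨l₂', r₂, hsp₂, hlast₂⟩ := strip_zeros (w₂.map a)
    have hmemA : ∀ (w : List (Fin m)) (l' : List ℕ) (r : ℕ), w.map a = l' ++ List.replicate r 0 →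
        ∀ d ∈ l', d ∈ Finset.image a Finset.univ := by
      intro w l' r hsp d hd
      have : d ∈ w.map a := by rw [hsp]; exact List.mem_append_left _ hd
      obtain ⟨i, _, rfl⟩ := List.mem_map.mp this
      exact Finset.mem_image.mpr ⟨i, Finset.mem_univ i, rfl⟩
    have hexp₁ : IsExpansion n (Finset.image a Finset.univ) (Nat.ofDigits n (w₁.map a)) l₁' :=
      ⟨hmemA w₁ l₁' r₁ hsp₁, hlast₁, by rw [hsp₁, ofDigits_append_zeros]⟩
    have hexp₂ : IsExpansion n (Finset.image a Finset.univ) (Nat.ofDigits n (w₁.map a)) l₂' :=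
      ⟨hmemA w₂ l₂' r₂ hsp₂, hlast₂, by rw [hC, hsp₂, ofDigits_append_zeros]⟩
    have hl' : l₁' = l₂' := UE _ _ _ hexp₁ hexp₂
    have hr : r₁ = r₂ := by
      have := hlen
      rw [← (List.length_map a : (w₁.map a).length = w₁.length), ← (List.length_map a : (w₂.map a).length = w₂.length), hsp₁, hsp₂, hl'] at this
      simpa using this
    have hmapeq : w₁.map a = w₂.map a := by rw [hsp₁, hsp₂, hl', hr]
    exact List.map_injective_iff.mpr ha hmapeq
  · -- FreeComp → UniqueExpansions
    intro FC
    obtain ⟨i₀, hi₀⟩ := h0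
    have hn0 : 0 < n := by omega
    -- helper: a nonempty expansion has nonzero value... handle empty cases
    have hempty : ∀ k l, IsExpansion n (Finset.image a Finset.univ) k l → k = 0 → l = [] := by
      intro k l ⟨_, hlast, hval⟩ hk
      rcases l.eq_nil_or_concat with rfl | ⟨l', e, rfl⟩
      · rfl
      · exfalso
        apply hlast
        have : e = 0 := ofDigits_zero_digits hn0 _ (hval.trans hk) e (by simp)
        simp [List.concat_eq_append, List.getLast?_concat, this]
    have key : ∀ k (l₁ l₂ : List ℕ), l₁.length ≤ l₂.length →
        IsExpansion n (Finset.image a Finset.univ) k l₁ →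
        IsExpansion n (Finset.image a Finset.univ) k l₂ → l₁ = l₂ := by
      intro k l₁ l₂ hle h₁ h₂
      rcases eq_or_ne l₁ [] with rfl | hne₁
      · rcases h₁ with ⟨_, _, hval₁⟩
        rw [hempty k l₂ h₂ (by simpa using hval₁.symm)]
      · have hne₂ : l₂ ≠ [] := by
          intro h; rw [h] at hle; simp at hle; exact hne₁ hle
        obtain ⟨hA₁, hlast₁, hval₁⟩ := h₁
        obtain ⟨hA₂, hlast₂, hval₂⟩ := h₂
        obtain ⟨w₁, hw₁⟩ := exists_word a l₁ (fun d hd => by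
          obtain ⟨i, _, hi⟩ := Finset.mem_image.mp (hA₁ d hd); exact ⟨i, hi⟩)
        obtain ⟨w₂, hw₂⟩ := exists_word a l₂ (fun d hd => by
          obtain ⟨i, _, hi⟩ := Finset.mem_image.mp (hA₂ d hd); exact ⟨i, hi⟩)
        set r := l₂.length - l₁.length with hr
        set W := w₁ ++ List.replicate r i₀ with hW
        have hWmap : W.map a = l₁ ++ List.replicate r 0 := by
          simp [hW, hw₁, hi₀]
        have hWlen : W.length = l₂.length := by
          have : w₁.length = l₁.length := by rw [← hw₁, List.length_map]
          simp [hW, this, hr]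
          omega
        have hcomp : (W.map (fun (i : Fin m) (x : ℤ) => (n : ℤ) * x + (a i : ℤ))).foldr (· ∘ ·) id
            = (w₂.map (fun (i : Fin m) (x : ℤ) => (n : ℤ) * x + (a i : ℤ))).foldr (· ∘ ·) id := by
          funext x
          rw [comp_eval, comp_eval, hWmap, hw₂, ofDigits_append_zeros, hval₁, hval₂, hWlen,
            ← (List.length_map a : (w₂.map a).length = w₂.length), hw₂]
        have hWne : W ≠ [] := by
          simp [hW]
          intro h; exact absurd (hw₁ ▸ congrArg (List.map a) h) (by simpa using hne₁)
        have hwne₂ : w₂ ≠ [] := by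
          intro h; rw [h] at hw₂; exact hne₂ hw₂.symm
        have hWeq : W = w₂ := FC W w₂ hWne hwne₂ hcomp
        have : l₁ ++ List.replicate r 0 = l₂ := by rw [← hWmap, hWeq, hw₂]
        rcases Nat.eq_zero_or_pos r with hr0 | hr0
        · rw [hr0] at this; simpa using this
        · exfalso
          apply hlast₂
          obtain ⟨r', hrr⟩ : ∃ r', r = r' + 1 := ⟨r - 1, by omega⟩
          rw [hrr] at this
          rw [← this, List.replicate_succ', ← List.append_assoc, List.getLast?_concat]
    intro k l₁ l₂ h₁ h₂
    rcases le_total l₁.length l₂.length with h | h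
    · exact key k l₁ l₂ h h₁ h₂
    · exact (key k l₂ l₁ h h₂ h₁).symm
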